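/- Let G' = Z_p × Z_q with p, q distinct primes, and let π₁, π₂, π₃, π₄ ∈ G' satisfy: π₁⁻¹π₂ has order divisible by p (its cyclic subgroup contains Z_p), and ⟨π₁⁻¹π₃⟩ = ⟨π₂⁻¹π₄⟩ = Z_q. Then for every γ ∈ G' there exists i ∈ {1,2,3,4} such that γ·πᵢ generates G'. -/
import Mathlib

section
variable {p q : ℕ} [Fact p.Prime] [Fact q.Prime]

lemma card_mzmod' (p : ℕ) [Fact p.Prime] : Nat.card (Multiplicative (ZMod p)) = p := by
  simp [Nat.card_zmod]

lemma key_gen (hpq : p ≠ q) (g : Multiplicative (ZMod p) × Multiplicative (ZMod q))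
    (h1 : g.1 ≠ 1) (h2 : g.2 ≠ 1) : Subgroup.zpowers g = ⊤ := by
  rw [← Subgroup.card_eq_iff_eq_top, Nat.card_zpowers, Nat.card_prod, card_mzmod', card_mzmod']
  have o1 : orderOf g.1 = p := by
    have := orderOf_dvd_natCard g.1
    rw [card_mzmod'] at this
    rcases (Nat.Prime.eq_one_or_self_of_dvd (Fact.out) _ this) with h | h
    · exact absurd (orderOf_eq_one_iff.mp h) h1
    · exact h
  have o2 : orderOf g.2 = q := by
    have := orderOf_dvd_natCard g.2
    rw [card_mzmod'] at this
    rcases (Nat.Prime.eq_one_or_self_of_dvd (Fact.out) _ this) with h | h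
    · exact absurd (orderOf_eq_one_iff.mp h) h2
    · exact h
  rw [Prod.orderOf, o1, o2, Nat.Coprime.lcm_eq_mul]
  exact (Nat.coprime_primes Fact.out Fact.out).mpr hpq

lemma zq_facts (g : Multiplicative (ZMod p) × Multiplicative (ZMod q))
    (h : Subgroup.zpowers g =
      (⊥ : Subgroup (Multiplicative (ZMod p))).prod (⊤ : Subgroup (Multiplicative (ZMod q)))) :
    g.1 = 1 ∧ g.2 ≠ 1 := by
  have hm : g ∈ Subgroup.zpowers g := Subgroup.mem_zpowers g
  rw [h, Subgroup.mem_prod] at hm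
  have h1 : g.1 = 1 := hm.1
  refine ⟨h1, fun h2 => ?_⟩
  have hg : g = 1 := Prod.ext h1 h2
  rw [hg, Subgroup.zpowers_one_eq_bot] at h
  have : Nontrivial (Multiplicative (ZMod q)) := by
    have : Fact (1 < q) := ⟨(Fact.out : q.Prime).one_lt⟩
    exact Multiplicative.instNontrivial
  obtain ⟨b, hb⟩ := exists_ne (1 : Multiplicative (ZMod q))
  have : ((1 : Multiplicative (ZMod p)), b) ∈
      (⊥ : Subgroup (Multiplicative (ZMod p))).prod (⊤ : Subgroup (Multiplicative (ZMod q))) :=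
    Subgroup.mem_prod.mpr ⟨Subgroup.mem_bot.mpr rfl, Subgroup.mem_top _⟩
  rw [← h, Subgroup.mem_bot] at this
  exact hb (congrArg Prod.snd this)

theorem stmt_11 (p q : ℕ) [Fact p.Prime] [Fact q.Prime] (hpq : p ≠ q)
    (π₁ π₂ π₃ π₄ : Multiplicative (ZMod p) × Multiplicative (ZMod q))
    (Zp Zq : Subgroup (Multiplicative (ZMod p) × Multiplicative (ZMod q)))
    (hZp : Zp = (⊤ : Subgroup (Multiplicative (ZMod p))).prod
      (⊥ : Subgroup (Multiplicative (ZMod q))))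
    (hZq : Zq = (⊥ : Subgroup (Multiplicative (ZMod p))).prod
      (⊤ : Subgroup (Multiplicative (ZMod q))))
    (h12 : Zp ≤ Subgroup.zpowers (π₁⁻¹ * π₂))
    (h13 : Subgroup.zpowers (π₁⁻¹ * π₃) = Zq)
    (h24 : Subgroup.zpowers (π₂⁻¹ * π₄) = Zq) :
    ∀ γ : Multiplicative (ZMod p) × Multiplicative (ZMod q),
      Subgroup.zpowers (γ * π₁) = ⊤ ∨ Subgroup.zpowers (γ * π₂) = ⊤ ∨
      Subgroup.zpowers (γ * π₃) = ⊤ ∨ Subgroup.zpowers (γ * π₄) = ⊤ := by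
  subst hZp hZq
  -- facts from h13, h24
  obtain ⟨e13a, e13b⟩ := zq_facts _ h13
  obtain ⟨e24a, e24b⟩ := zq_facts _ h24
  have h3a : π₃.1 = π₁.1 := by
    rw [Prod.fst_mul, Prod.fst_inv] at e13a
    exact (inv_mul_eq_one.mp e13a).symm
  have h4a : π₄.1 = π₂.1 := by
    rw [Prod.fst_mul, Prod.fst_inv] at e24a
    exact (inv_mul_eq_one.mp e24a).symm
  have h3b : π₃.2 ≠ π₁.2 := fun h => e13b (by
    rw [Prod.snd_mul, Prod.snd_inv, h, inv_mul_cancel])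
  have h4b : π₄.2 ≠ π₂.2 := fun h => e24b (by
    rw [Prod.snd_mul, Prod.snd_inv, h, inv_mul_cancel])
  -- fact from h12
  have h2a : π₂.1 ≠ π₁.1 := by
    intro h
    have : Nontrivial (Multiplicative (ZMod p)) := by
      have : Fact (1 < p) := ⟨(Fact.out : p.Prime).one_lt⟩
      exact Multiplicative.instNontrivial
    obtain ⟨a, ha⟩ := exists_ne (1 : Multiplicative (ZMod p))
    have hmem : (a, (1 : Multiplicative (ZMod q))) ∈ Subgroup.zpowers (π₁⁻¹ * π₂) :=
      h12 (Subgroup.mem_prod.mpr ⟨Subgroup.mem_top _, Subgroup.mem_bot.mpr rfl⟩)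
    obtain ⟨n, hn⟩ := hmem
    have h1 : (π₁⁻¹ * π₂).1 = 1 := by
      rw [Prod.fst_mul, Prod.fst_inv, h, inv_mul_cancel]
    have hfst := congrArg Prod.fst hn
    have hz : ((π₁⁻¹ * π₂) ^ n).1 = (π₁⁻¹ * π₂).1 ^ n :=
      map_zpow (MonoidHom.fst (Multiplicative (ZMod p)) (Multiplicative (ZMod q))) _ n
    rw [hz, h1, one_zpow] at hfst
    exact ha hfst.symm
  intro γ
  by_cases hx : γ.1 * π₁.1 = 1
  · -- use π₂ or π₄
    have hx2 : γ.1 * π₂.1 ≠ 1 := fun h => h2a (by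
      have := h.trans hx.symm
      exact mul_left_cancel this)
    by_cases hy : γ.2 * π₂.2 = 1
    · refine Or.inr (Or.inr (Or.inr (key_gen hpq _ ?_ ?_)))
      · show γ.1 * π₄.1 ≠ 1; rwa [h4a]
      · show γ.2 * π₄.2 ≠ 1
        intro h
        exact h4b (mul_left_cancel (h.trans hy.symm))
    · exact Or.inr (Or.inl (key_gen hpq _ hx2 hy))
  · by_cases hy : γ.2 * π₁.2 = 1
    · refine Or.inr (Or.inr (Or.inl (key_gen hpq _ ?_ ?_)))
      · show γ.1 * π₃.1 ≠ 1; rwa [h3a]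
      · show γ.2 * π₃.2 ≠ 1
        intro h
        exact h3b (mul_left_cancel (h.trans hy.symm))
    · exact Or.inl (key_gen hpq _ hx hy)
end
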